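/- arXiv:1111.1814 — 4 statements merged into one kernel-verified Lean document; each statement's English description precedes it below -/
import Mathlib

section
/- Let G be a finite simple connected split graph, i.e., V(G) = V_1 ∪ V_2 where V_1 induces a clique and V_2 induces an independent set, and let R ⊆ V(G) be nonempty. Let G' be the graph obtained from G by adding two new nonadjacent vertices s and t, each made adjacent to every vertex of R. Then G' has chordality at most 5, i.e., G' contains no induced cycle of length at least 6. -/
open SimpleGraph

/-- A walk avoids a set `S` if none of its vertices lies in `S`. -/
def WalkAvoids {V : Type*} {G : SimpleGraph V} {u v : V} (p : G.Walk u v) (S : Set V) : Prop :=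
  ∀ w ∈ p.support, w ∉ S

/-- `S` is an `(s,t)`-vertex separator: `s, t ∉ S` and every walk from `s` to `t` meets `S`. -/
def IsSep {V : Type*} (G : SimpleGraph V) (s t : V) (S : Set V) : Prop :=
  s ∉ S ∧ t ∉ S ∧ ∀ p : G.Walk s t, ∃ w ∈ p.support, w ∈ S

/-- A connected `(s,t)`-vertex separator. -/
def IsConnSep {V : Type*} (G : SimpleGraph V) (s t : V) (S : Set V) : Prop :=
  IsSep G s t S ∧ (G.induce S).Connected

/-- A minimal `(s,t)`-vertex separator: no proper subset is a separator. -/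
def IsMinimalSep {V : Type*} (G : SimpleGraph V) (s t : V) (S : Set V) : Prop :=
  IsSep G s t S ∧ ∀ S' ⊂ S, ¬ IsSep G s t S'

/-- The connected component of `s` in `G − S`, as the set of vertices reachable
from `s` by walks avoiding `S`. -/
def CompOf {V : Type*} (G : SimpleGraph V) (S : Set V) (s : V) : Set V :=
  {v | ∃ p : G.Walk s v, WalkAvoids p S}

/-- `G` has chordality at most `c`: it contains no induced cycle of length at least `c+1`. -/
def ChordalityAtMost {V : Type*} (G : SimpleGraph V) (c : ℕ) : Prop :=
  ∀ n, c + 1 ≤ n → IsEmpty (cycleGraph n ↪g G)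

/-- The graph `G'` obtained from `G` by adding two new nonadjacent vertices
`s = Sum.inr false` and `t = Sum.inr true`, each made adjacent to every vertex of `R`. -/
def TermExt {V : Type*} (G : SimpleGraph V) (R : Set V) : SimpleGraph (V ⊕ Bool) :=
  SimpleGraph.fromRel (fun a b =>
    match a, b with
    | Sum.inl u, Sum.inl v => G.Adj u v
    | Sum.inl y, Sum.inr _ => y ∈ R
    | _, _ => False)

open Fin.NatCast Fin.CommRing

section Helpers

variable {V : Type*} {G : SimpleGraph V} {R : Set V}

lemma termExt_adj_inl_inl {u v : V} :
    (TermExt G R).Adj (Sum.inl u) (Sum.inl v) ↔ G.Adj u v := by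
  constructor
  · rintro ⟨-, h | h⟩
    · exact h
    · exact h.symm
  · intro h
    exact ⟨by simpa using h.ne, Or.inl h⟩

lemma termExt_adj_inl_inr {u : V} {b : Bool} :
    (TermExt G R).Adj (Sum.inl u) (Sum.inr b) ↔ u ∈ R := by
  constructor
  · rintro ⟨-, h | h⟩
    · exact h
    · cases h
  · intro h
    exact ⟨by simp, Or.inl h⟩

lemma termExt_not_adj_inr {b c : Bool} :
    ¬ (TermExt G R).Adj (Sum.inr b) (Sum.inr c) := by
  rintro ⟨-, h | h⟩ <;> cases h

lemma fin_cast_eq_zero {n d : ℕ} (h1 : 1 ≤ d) (h2 : d < n + 2)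
    (h : (d : Fin (n+2)) = 0) : False := by
  have := congrArg Fin.val h
  rw [Fin.val_natCast] at this
  simp [Nat.mod_eq_of_lt h2] at this
  omega

lemma fin_add_ne {n d : ℕ} (a : Fin (n+2)) (h1 : 1 ≤ d) (h2 : d < n + 2) :
    a + (d : Fin (n+2)) ≠ a := by
  intro h
  have h' : a + (d : Fin (n+2)) = a + 0 := by rw [h, add_zero]
  exact fin_cast_eq_zero h1 h2 (add_left_cancel h')

lemma fin_add_ne' {n i j : ℕ} (a : Fin (n+2)) (hij : i < j) (h2 : j - i < n + 2) :
    a + (i : Fin (n+2)) ≠ a + (j : Fin (n+2)) := by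
  intro h
  have hj : j = i + (j - i) := by omega
  rw [hj, Nat.cast_add, ← add_assoc] at h
  have h' : (a + (i : Fin (n+2))) + ((j - i : ℕ) : Fin (n+2)) = (a + (i : Fin (n+2))) + 0 := by
    rw [← h, add_zero]
  exact fin_cast_eq_zero (by omega) h2 (add_left_cancel h')

lemma cyc_adj' {n i j : ℕ} (a : Fin (n+2)) (hij : j = i + 1) :
    (cycleGraph (n+2)).Adj (a + (i : Fin (n+2))) (a + (j : Fin (n+2))) := by
  subst hij
  rw [cycleGraph_adj]
  right
  push_cast
  ring

lemma cyc_not_adj {n i j : ℕ} (a : Fin (n+2)) (h2 : i + 2 ≤ j) (h4 : j ≤ i + n) :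
    ¬ (cycleGraph (n+2)).Adj (a + (i : Fin (n+2))) (a + (j : Fin (n+2))) := by
  rw [cycleGraph_adj]
  set d := j - i with hd
  have hj : j = i + d := by omega
  rintro (h | h)
  · -- (a+i) - (a+j) = 1 , so ↑(d+1) = 0
    have h0 : ((d + 1 : ℕ) : Fin (n+2)) = 0 := by
      rw [hj] at h
      push_cast at h ⊢
      linear_combination -h
    exact fin_cast_eq_zero (by omega) (by omega) h0
  · -- (a+j) - (a+i) = 1, so ↑d = ↑1
    have h0 : ((d : ℕ) : Fin (n+2)) = ((1 : ℕ) : Fin (n+2)) := by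
      rw [hj] at h
      push_cast at h ⊢
      linear_combination h
    have := congrArg Fin.val h0
    rw [Fin.val_natCast, Fin.val_natCast] at this
    rw [Nat.mod_eq_of_lt (by omega), Nat.mod_eq_of_lt (by omega)] at this
    omega

end Helpers

theorem stmt4 {V : Type*} [Fintype V] (G : SimpleGraph V) (hG : G.Connected)
    (V1 V2 : Set V) (hcover : V1 ∪ V2 = Set.univ)
    (hclique : G.IsClique V1) (hindep : ∀ u ∈ V2, ∀ v ∈ V2, ¬ G.Adj u v)
    (R : Set V) (hR : R.Nonempty) :
    ChordalityAtMost (TermExt G R) 5 := by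
  intro n hn
  obtain ⟨m, rfl⟩ : ∃ m, n = m + 2 := ⟨n - 2, by omega⟩
  have hm : 4 ≤ m := by omega
  constructor
  intro f
  have hfinj : Function.Injective f := f.injective
  -- main window argument
  have window : ∀ a : Fin (m+2), (∀ k, k ≠ a → ∃ v, f k = Sum.inl v) → False := by
    intro a hwin
    obtain ⟨v1, hv1⟩ := hwin (a + ((1:ℕ) : Fin (m+2))) (fin_add_ne a (by omega) (by omega))
    obtain ⟨v2, hv2⟩ := hwin (a + ((2:ℕ) : Fin (m+2))) (fin_add_ne a (by omega) (by omega))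
    obtain ⟨v3, hv3⟩ := hwin (a + ((3:ℕ) : Fin (m+2))) (fin_add_ne a (by omega) (by omega))
    obtain ⟨v4, hv4⟩ := hwin (a + ((4:ℕ) : Fin (m+2))) (fin_add_ne a (by omega) (by omega))
    obtain ⟨v5, hv5⟩ := hwin (a + ((5:ℕ) : Fin (m+2))) (fin_add_ne a (by omega) (by omega))
    have adj : ∀ (i j : ℕ), (cycleGraph (m+2)).Adj (a + (i : Fin (m+2))) (a + (j : Fin (m+2))) →
        ∀ {u w : V}, f (a + (i : Fin (m+2))) = Sum.inl u → f (a + (j : Fin (m+2))) = Sum.inl w →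
        G.Adj u w := by
      intro i j h u w hu hw
      have h' := f.map_adj_iff.mpr h
      rw [hu, hw] at h'
      exact termExt_adj_inl_inl.mp h'
    have nadj : ∀ (i j : ℕ), ¬ (cycleGraph (m+2)).Adj (a + (i : Fin (m+2))) (a + (j : Fin (m+2))) →
        ∀ {u w : V}, f (a + (i : Fin (m+2))) = Sum.inl u → f (a + (j : Fin (m+2))) = Sum.inl w →
        ¬ G.Adj u w := by
      intro i j h u w hu hw hadj
      exact h (f.map_adj_iff.mp (by rw [hu, hw]; exact termExt_adj_inl_inl.mpr hadj))
    have ne' : ∀ (i j : ℕ), (a + (i : Fin (m+2))) ≠ (a + (j : Fin (m+2))) →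
        ∀ {u w : V}, f (a + (i : Fin (m+2))) = Sum.inl u → f (a + (j : Fin (m+2))) = Sum.inl w →
        u ≠ w := by
      intro i j h u w hu hw huw
      exact h (hfinj (by rw [hu, hw, huw]))
    have a12 := adj 1 2 (cyc_adj' a rfl) hv1 hv2
    have a23 := adj 2 3 (cyc_adj' a rfl) hv2 hv3
    have a34 := adj 3 4 (cyc_adj' a rfl) hv3 hv4
    have a45 := adj 4 5 (cyc_adj' a rfl) hv4 hv5
    have n13 := nadj 1 3 (cyc_not_adj a (by omega) (by omega)) hv1 hv3
    have n14 := nadj 1 4 (cyc_not_adj a (by omega) (by omega)) hv1 hv4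
    have n15 := nadj 1 5 (cyc_not_adj a (by omega) (by omega)) hv1 hv5
    have n24 := nadj 2 4 (cyc_not_adj a (by omega) (by omega)) hv2 hv4
    have n25 := nadj 2 5 (cyc_not_adj a (by omega) (by omega)) hv2 hv5
    have n35 := nadj 3 5 (cyc_not_adj a (by omega) (by omega)) hv3 hv5
    have e13 := ne' 1 3 (fin_add_ne' a (by omega) (by omega)) hv1 hv3
    have e14 := ne' 1 4 (fin_add_ne' a (by omega) (by omega)) hv1 hv4
    have e15 := ne' 1 5 (fin_add_ne' a (by omega) (by omega)) hv1 hv5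
    have e24 := ne' 2 4 (fin_add_ne' a (by omega) (by omega)) hv2 hv4
    have e25 := ne' 2 5 (fin_add_ne' a (by omega) (by omega)) hv2 hv5
    have e35 := ne' 3 5 (fin_add_ne' a (by omega) (by omega)) hv3 hv5
    have mem : ∀ v : V, v ∈ V1 ∨ v ∈ V2 := fun v => by
      have : v ∈ V1 ∪ V2 := by rw [hcover]; exact Set.mem_univ v
      exact this
    rcases mem v1 with h1 | h1 <;> rcases mem v2 with h2 | h2 <;>
      rcases mem v3 with h3 | h3 <;> rcases mem v4 with h4 | h4 <;>
      rcases mem v5 with h5 | h5 <;>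
    first
      | exact n13 (hclique h1 h3 e13)
      | exact n14 (hclique h1 h4 e14)
      | exact n15 (hclique h1 h5 e15)
      | exact n24 (hclique h2 h4 e24)
      | exact n25 (hclique h2 h5 e25)
      | exact n35 (hclique h3 h5 e35)
      | exact hindep _ h1 _ h2 a12
      | exact hindep _ h2 _ h3 a23
      | exact hindep _ h3 _ h4 a34
      | exact hindep _ h4 _ h5 a45
  by_cases hs : ∃ a, f a = Sum.inr false
  · by_cases ht : ∃ b, f b = Sum.inr true
    · -- both s and t are on the cycle: contradiction
      obtain ⟨a, ha⟩ := hs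
      obtain ⟨b, hb⟩ := ht
      have hab : ¬ (cycleGraph (m+2)).Adj a b := by
        intro h
        have h' := f.map_adj_iff.mpr h
        rw [ha, hb] at h'
        exact termExt_not_adj_inr h'
      have key : ∀ c : Fin (m+2), (cycleGraph (m+2)).Adj a c → (cycleGraph (m+2)).Adj c b := by
        intro c hc
        obtain ⟨v, hv⟩ : ∃ v, f c = Sum.inl v := by
          cases hfc : f c with
          | inl v => exact ⟨v, rfl⟩
          | inr bb =>
            cases bb with
            | false =>
              have : c = a := hfinj (hfc.trans ha.symm)
              exact absurd (this ▸ hc) (cycleGraph (m+2)).irrefl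
            | true =>
              have : c = b := hfinj (hfc.trans hb.symm)
              exact absurd (this ▸ hc) hab
        have hvR : v ∈ R := by
          have h' := f.map_adj_iff.mpr hc
          rw [ha, hv] at h'
          exact termExt_adj_inl_inr.mp h'.symm
        apply f.map_adj_iff.mp
        rw [hv, hb]
        exact termExt_adj_inl_inr.mpr hvR
      have hba : a ≠ b := by
        intro h
        have : (Sum.inr false : V ⊕ Bool) = Sum.inr true := by rw [← ha, ← hb, h]
        simp at this
      have hadj1 : (cycleGraph (m+2)).Adj a (a + 1) := by
        rw [cycleGraph_adj]; right; ring
      have hadj2 : (cycleGraph (m+2)).Adj a (a - 1) := by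
        rw [cycleGraph_adj]; left; ring
      have k1 := key (a + 1) hadj1
      have k2 := key (a - 1) hadj2
      rw [cycleGraph_adj] at k1 k2
      have hb1 : b = a + 2 := by
        rcases k1 with h | h
        · exact absurd (by linear_combination -h : b = a).symm hba
        · linear_combination h
      have hb2 : b = a - 2 := by
        rcases k2 with h | h
        · linear_combination -h
        · exact absurd (by linear_combination h : b = a).symm hba
      have h4 : ((4 : ℕ) : Fin (m+2)) = 0 := by
        have : a + 2 = a - 2 := hb1 ▸ hb2
        push_cast
        linear_combination this
      exact fin_cast_eq_zero (by omega) (by omega) h4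
    · obtain ⟨a, ha⟩ := hs
      apply window a
      intro k hk
      cases hfk : f k with
      | inl v => exact ⟨v, rfl⟩
      | inr bb =>
        cases bb with
        | false => exact absurd (hfinj (hfk.trans ha.symm)) hk
        | true => exact absurd ⟨k, hfk⟩ ht
  · by_cases ht : ∃ b, f b = Sum.inr true
    · obtain ⟨b, hb⟩ := ht
      apply window b
      intro k hk
      cases hfk : f k with
      | inl v => exact ⟨v, rfl⟩
      | inr bb =>
        cases bb with
        | false => exact absurd ⟨k, hfk⟩ hs
        | true => exact absurd (hfinj (hfk.trans hb.symm)) hk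
    · apply window 0
      intro k _
      cases hfk : f k with
      | inl v => exact ⟨v, rfl⟩
      | inr bb =>
        cases bb with
        | false => exact absurd ⟨k, hfk⟩ hs
        | true => exact absurd ⟨k, hfk⟩ ht
end

section
/- Let G be a finite simple connected graph with a nonempty terminal set R ⊆ V(G), and let G' be the graph obtained from G by adding two new nonadjacent vertices s and t, each made adjacent to every vertex of R. Then G has a Steiner tree for terminal set R with at most r edges (equivalently, there is a set W ⊆ V(G) with R ⊆ W, |W| ≤ r+1, such that the subgraph of G induced on W is connected) if and only if G' has a connected (s,t)-vertex separator with at most r+1 vertices. -/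
open SimpleGraph

lemma te_inl {V : Type*} (G : SimpleGraph V) (R : Set V) (u v : V) :
    (TermExt G R).Adj (Sum.inl u) (Sum.inl v) ↔ G.Adj u v := by
  simp only [TermExt, fromRel_adj]
  constructor
  · rintro ⟨h, h1 | h1⟩ <;> [exact h1; exact h1.symm]
  · exact fun h => ⟨by simp [h.ne], Or.inl h⟩

lemma te_inr {V : Type*} (G : SimpleGraph V) (R : Set V) (b : Bool) (x : V ⊕ Bool) :
    (TermExt G R).Adj (Sum.inr b) x ↔ ∃ y ∈ R, x = Sum.inl y := by
  simp only [TermExt, fromRel_adj]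
  cases x with
  | inl y => simp
  | inr c => simp

noncomputable def extIso {V : Type*} (G : SimpleGraph V) (R : Set V) (W : Set V) :
    G.induce W ≃g (TermExt G R).induce (Sum.inl '' W) where
  toEquiv := Equiv.Set.image Sum.inl W Sum.inl_injective
  map_rel_iff' := by
    intro a b
    simp [Equiv.Set.image, Equiv.Set.imageOfInjOn, comap_adj, te_inl]

theorem stmt5 {V : Type*} [Fintype V] (G : SimpleGraph V) (hG : G.Connected)
    (R : Set V) (hR : R.Nonempty) (r : ℕ) :
    (∃ W : Set V, R ⊆ W ∧ W.ncard ≤ r + 1 ∧ (G.induce W).Connected) ↔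
    (∃ S : Set (V ⊕ Bool),
      IsConnSep (TermExt G R) (Sum.inr false) (Sum.inr true) S ∧ S.ncard ≤ r + 1) := by
  constructor
  · rintro ⟨W, hRW, hcard, hconn⟩
    refine ⟨Sum.inl '' W, ⟨⟨?_, ?_, ?_⟩, ?_⟩, ?_⟩
    · simp
    · simp
    · intro p
      cases p with
      | cons h q =>
        rename_i a
        obtain ⟨y, hy, rfl⟩ := (te_inr G R false a).mp h
        exact ⟨Sum.inl y, by simp, ⟨y, hRW hy, rfl⟩⟩
    · exact (extIso G R W).connected_iff.mp hconn
    · rwa [Set.ncard_image_of_injective W Sum.inl_injective]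
  · rintro ⟨S, ⟨⟨hs, ht, hsep⟩, hconn⟩, hcard⟩
    have hrange : S ⊆ Set.range Sum.inl := by
      rintro (v | b) hx
      · exact ⟨v, rfl⟩
      · cases b
        · exact absurd hx hs
        · exact absurd hx ht
    have hS : S = Sum.inl '' (Sum.inl ⁻¹' S) :=
      (Set.image_preimage_eq_iff.mpr hrange).symm
    refine ⟨Sum.inl ⁻¹' S, ?_, ?_, ?_⟩
    · intro u hu
      have h1 : (TermExt G R).Adj (Sum.inr false) (Sum.inl u) :=
        (te_inr G R false (Sum.inl u)).mpr ⟨u, hu, rfl⟩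
      have h2 : (TermExt G R).Adj (Sum.inl u) (Sum.inr true) :=
        ((te_inr G R true (Sum.inl u)).mpr ⟨u, hu, rfl⟩).symm
      obtain ⟨w, hw, hwS⟩ := hsep (Walk.cons h1 (Walk.cons h2 Walk.nil))
      simp only [Walk.support_cons, Walk.support_nil, List.mem_cons,
        List.mem_singleton] at hw
      rcases hw with rfl | rfl | rfl | h
      · exact absurd hwS hs
      · exact hwS
      · exact absurd hwS ht
      · simp at h
    · rw [hS, Set.ncard_image_of_injective _ Sum.inl_injective] at hcard
      exact hcard
    · rw [hS] at hconn
      exact (extIso G R _).connected_iff.mpr hconn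
end

section
/- Let G be a finite simple graph of chordality c (c ≥ 3), let s and t be nonadjacent distinct vertices, and let S be a minimal (s,t)-vertex separator with C_s and C_t the connected components of G − S containing s and t respectively. Then for every pair of nonadjacent vertices u, v ∈ S, there exists a u–v path in G of length at most ⌈c/2⌉ all of whose internal vertices lie in C_s, or a u–v path in G of length at most ⌈c/2⌉ all of whose internal vertices lie in C_t. -/
open SimpleGraph

set_option linter.unusedVariables false
set_option linter.unusedSectionVars false

namespace St8
variable {V : Type*} {G : SimpleGraph V}

/-- prefix of a walk up to index `n` -/
def wtake : ∀ {a b : V}, (p : G.Walk a b) → (n : ℕ) → G.Walk a (p.getVert n)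
  | _, _, .nil, _ => .nil
  | _, _, .cons h _, 0 => .nil
  | _, _, .cons h q, n+1 => .cons h (wtake q n)

/-- suffix of a walk from index `n` -/
def wdrop : ∀ {a b : V}, (p : G.Walk a b) → (n : ℕ) → G.Walk (p.getVert n) b
  | _, _, .nil, _ => .nil
  | _, _, .cons h q, 0 => .cons h q
  | _, _, .cons _ q, n+1 => wdrop q n

lemma wtake_length : ∀ {a b : V} (p : G.Walk a b) (n : ℕ), (wtake p n).length = min n p.length
  | _, _, .nil, n => by simp [wtake]
  | _, _, .cons h q, 0 => by simp [wtake]; rfl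
  | _, _, .cons h q, n+1 => by
      simp [wtake, wtake_length q n, Nat.succ_min_succ]

lemma wdrop_length : ∀ {a b : V} (p : G.Walk a b) (n : ℕ), (wdrop p n).length = p.length - n
  | _, _, .nil, n => by simp [wdrop]
  | _, _, .cons h q, 0 => by simp [wdrop]; rfl
  | _, _, .cons h q, n+1 => by
      simpa [wdrop] using wdrop_length q n

lemma wtake_support : ∀ {a b : V} (p : G.Walk a b) (n : ℕ) (w : V),
    w ∈ (wtake p n).support → w ∈ p.support
  | _, _, .nil, n, w => by simp [wtake]
  | _, _, .cons h q, 0, w => by simp [wtake]; exact fun hw => .inl (List.mem_singleton.1 hw)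
  | _, _, .cons h q, n+1, w => by
      show w ∈ (SimpleGraph.Walk.cons h (wtake q n)).support → _
      simp only [SimpleGraph.Walk.support_cons, List.mem_cons]
      rintro (rfl | hw)
      · exact .inl rfl
      · exact .inr (wtake_support q n w hw)

lemma wdrop_support : ∀ {a b : V} (p : G.Walk a b) (n : ℕ) (w : V),
    w ∈ (wdrop p n).support → w ∈ p.support
  | _, _, .nil, n, w => by simp [wdrop, SimpleGraph.Walk.getVert]
  | _, _, .cons h q, 0, w => by simp [wdrop]; exact fun hw => List.mem_cons.1 hw
  | _, _, .cons h q, n+1, w => fun hw => by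
      simp only [SimpleGraph.Walk.support_cons, List.mem_cons]
      exact .inr (wdrop_support q n w hw)

lemma getVert_mem_support {a b : V} (p : G.Walk a b) (n : ℕ) :
    p.getVert n ∈ p.support :=
  SimpleGraph.Walk.mem_support_iff_exists_getVert.2
    (by
      rcases le_or_gt n p.length with h | h
      · exact ⟨n, rfl, h⟩
      · exact ⟨p.length, by rw [p.getVert_of_length_le h.le, SimpleGraph.Walk.getVert_length], le_rfl⟩)

lemma IsPath.getVert_inj : ∀ {a b : V} {p : G.Walk a b}, p.IsPath →
    ∀ {i j : ℕ}, i ≤ p.length → j ≤ p.length → p.getVert i = p.getVert j → i = j := by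
  intro a b p hp
  induction p with
  | nil => intro i j hi hj _; simp at hi hj; omega
  | @cons a c b h q ih =>
    intro i j hi hj hij
    rw [SimpleGraph.Walk.cons_isPath_iff] at hp
    match i, j with
    | 0, 0 => rfl
    | 0, j+1 =>
      exfalso
      rw [SimpleGraph.Walk.getVert_zero, SimpleGraph.Walk.getVert_cons_succ] at hij
      exact hp.2 (hij ▸ getVert_mem_support q j)
    | i+1, 0 =>
      exfalso
      rw [SimpleGraph.Walk.getVert_zero, SimpleGraph.Walk.getVert_cons_succ] at hij
      exact hp.2 (hij ▸ getVert_mem_support q i)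
    | i+1, j+1 =>
      rw [SimpleGraph.Walk.getVert_cons_succ, SimpleGraph.Walk.getVert_cons_succ] at hij
      simp only [SimpleGraph.Walk.length_cons, Nat.add_le_add_iff_right] at hi hj
      exact congrArg Nat.succ (ih hp.1 hi hj hij)


section
variable {S : Set V} [DecidableEq V]


lemma mem_compOf_of_avoids {s v : V} (p : G.Walk s v) (hp : WalkAvoids p S) :
    ∀ y ∈ p.support, y ∈ CompOf G S s := fun y hy =>
  ⟨p.takeUntil y hy, fun w hw => hp w (p.support_takeUntil_subset hy hw)⟩

lemma compOf_not_mem {s v : V} (h : v ∈ CompOf G S s) : v ∉ S := by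
  obtain ⟨p, hp⟩ := h
  exact hp v p.end_mem_support

lemma compOf_self {s : V} (hs : s ∉ S) : s ∈ CompOf G S s :=
  ⟨.nil, by intro w hw; simp at hw; subst hw; exact hs⟩

/-- no vertex of `C_s` equals or is adjacent to a vertex of `C_t` -/
lemma compOf_cross {s t a b : V} (hsep : IsSep G s t S)
    (ha : a ∈ CompOf G S s) (hb : b ∈ CompOf G S t) : a ≠ b ∧ ¬ G.Adj a b := by
  obtain ⟨p, hp⟩ := ha
  obtain ⟨q, hq⟩ := hb
  constructor
  · rintro rfl
    obtain ⟨w, hw, hwS⟩ := hsep.2.2 (p.append q.reverse)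
    rw [SimpleGraph.Walk.support_append] at hw
    rcases List.mem_append.1 hw with hw | hw
    · exact hp w hw hwS
    · exact hq w (by simpa using List.mem_of_mem_tail hw) hwS
  · intro hab
    obtain ⟨w, hw, hwS⟩ := hsep.2.2 (p.append (SimpleGraph.Walk.cons hab q.reverse))
    rw [SimpleGraph.Walk.support_append] at hw
    rcases List.mem_append.1 hw with hw | hw
    · exact hp w hw hwS
    · rcases List.mem_cons.1 (List.mem_of_mem_tail hw) with rfl | h1
      · exact hp w p.end_mem_support hwS
      · exact hq w (by simpa using h1) hwS

/-- walking to a separator vertex whose only `S`-vertex is the endpoint gives a neighbor in the component -/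
lemma neighbor_of_walk {a x : V} (w : G.Walk a x) (ha : a ∉ S) (hx : x ∈ S)
    (hw : ∀ y ∈ w.support, y ∈ S → y = x) :
    ∃ b, G.Adj b x ∧ b ∈ CompOf G S a := by
  induction w with
  | nil => exact absurd hx ha
  | @cons a c x h q ih =>
    by_cases hcS : c ∈ S
    · have : c = x := hw c (by simp) hcS
      subst this
      exact ⟨a, h, compOf_self ha⟩
    · obtain ⟨b, hb, hbC⟩ := ih hcS hx
        (fun y hy => hw y (by rw [SimpleGraph.Walk.support_cons]; exact List.mem_cons_of_mem _ hy))
      obtain ⟨q', hq'⟩ := hbC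
      refine ⟨b, hb, SimpleGraph.Walk.cons h q', fun y hy => ?_⟩
      rw [SimpleGraph.Walk.support_cons] at hy
      rcases List.mem_cons.1 hy with rfl | hy
      · exact ha
      · exact hq' y hy

/-- every vertex of a minimal separator has neighbors in both components -/
lemma minimal_sep_neighbors {s t : V} (hS : IsMinimalSep G s t S) {x : V} (hx : x ∈ S) :
    (∃ a, G.Adj a x ∧ a ∈ CompOf G S s) ∧ (∃ b, G.Adj b x ∧ b ∈ CompOf G S t) := by
  have hs : s ∉ S := hS.1.1
  have ht : t ∉ S := hS.1.2.1
  have hsub : S \ {x} ⊂ S := Set.diff_singleton_ssubset.2 hx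
  have hns := hS.2 _ hsub
  have hnall : ¬ ∀ p : G.Walk s t, ∃ w ∈ p.support, w ∈ S \ {x} :=
    fun h => hns ⟨fun h2 => hs h2.1, fun h2 => ht h2.1, h⟩
  push_neg at hnall
  obtain ⟨p, hp⟩ := hnall
  obtain ⟨w, hwsup, hwS⟩ := hS.1.2.2 p
  have hwx : w = x := by
    have := hp w hwsup
    simp only [Set.mem_diff, Set.mem_singleton_iff, not_and, not_not] at this
    exact this hwS
  subst hwx
  have key : ∀ y ∈ p.support, y ∈ S → y = w := by
    intro y hy hyS
    have := hp y hy
    simp only [Set.mem_diff, Set.mem_singleton_iff, not_and, not_not] at this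
    exact this hyS
  constructor
  · exact neighbor_of_walk (p.takeUntil w hwsup) hs hwS
      (fun y hy => key y (p.support_takeUntil_subset hwsup hy))
  · exact neighbor_of_walk (p.dropUntil w hwsup).reverse ht hwS
      (fun y hy => key y (p.support_dropUntil_subset hwsup (by simpa using hy)))

/-- any two vertices of a component are joined by a walk inside the component -/
lemma compOf_walk {s a b : V} (ha : a ∈ CompOf G S s) (hb : b ∈ CompOf G S s) :
    ∃ w : G.Walk a b, ∀ y ∈ w.support, y ∈ CompOf G S s := by
  obtain ⟨p, hp⟩ := ha
  obtain ⟨q, hq⟩ := hb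
  refine ⟨p.reverse.append q, fun y hy => ?_⟩
  rw [SimpleGraph.Walk.support_append] at hy
  rcases List.mem_append.1 hy with hy | hy
  · exact mem_compOf_of_avoids p hp y (by simpa using hy)
  · exact mem_compOf_of_avoids q hq y (List.mem_of_mem_tail hy)


end


lemma mod_helper {n a : ℕ} (h : a < 2 * n) : a % n = if a < n then a else a - n := by
  split
  · exact Nat.mod_eq_of_lt ‹_›
  · rw [Nat.mod_eq_sub_mod (by omega), Nat.mod_eq_of_lt (by omega)]

lemma cyc_adj_nat {n : ℕ} (i j : Fin n) (hn : 3 ≤ n) :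
    (cycleGraph n).Adj i j ↔ (j.val = i.val + 1 ∨ i.val = j.val + 1 ∨
      (i.val = 0 ∧ j.val = n - 1) ∨ (j.val = 0 ∧ i.val = n - 1)) := by
  have hi := i.isLt
  have hj := j.isLt
  have h1 : ((i - j : Fin n)).val = (n - j.val + i.val) % n := by rw [Fin.sub_def]
  have h2 : ((j - i : Fin n)).val = (n - i.val + j.val) % n := by rw [Fin.sub_def]
  rw [SimpleGraph.cycleGraph_adj', h1, h2, mod_helper (by omega), mod_helper (by omega)]
  split_ifs <;> omega

/-- a length-minimal path with internal vertices in `C` has no chords -/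
lemma chord [DecidableEq V] {u v : V} {C : Set V} {p : G.Walk u v} (hp : p.IsPath)
    (hmin : ∀ q : G.Walk u v, q.IsPath →
      (∀ w ∈ q.support, w ≠ u → w ≠ v → w ∈ C) → p.length ≤ q.length)
    (hPI : ∀ w ∈ p.support, w ≠ u → w ≠ v → w ∈ C)
    {i j : ℕ} (hij : i < j) (hj : j ≤ p.length)
    (hadj : G.Adj (p.getVert i) (p.getVert j)) : j = i + 1 := by
  by_contra hne
  have hij2 : i + 2 ≤ j := by omega
  set q : G.Walk u v := (wtake p i).append (SimpleGraph.Walk.cons hadj (wdrop p j)) with hqdef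
  have hql : q.length = i + 1 + (p.length - j) := by
    rw [hqdef, SimpleGraph.Walk.length_append, SimpleGraph.Walk.length_cons,
      wtake_length, wdrop_length]
    omega
  have hqsup : ∀ w ∈ q.support, w ∈ p.support := by
    intro w hw
    rw [hqdef, SimpleGraph.Walk.support_append] at hw
    rcases List.mem_append.1 hw with hw | hw
    · exact wtake_support p i w hw
    · rw [SimpleGraph.Walk.support_cons, List.tail_cons] at hw
      exact wdrop_support p j w hw
  have hfin := hmin (q.toPath : G.Walk u v) q.toPath.2
    (fun w hw hwu hwv => hPI w (hqsup w (q.support_toPath_subset hw)) hwu hwv)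
  have hle : (q.toPath : G.Walk u v).length ≤ q.length := q.length_bypass_le
  omega

lemma cycle_embed {u v : V} {C D : Set V}
    (hCD : ∀ a b, a ∈ C → b ∈ D → a ≠ b ∧ ¬ G.Adj a b)
    (huD : u ∉ D) (hvC : v ∉ C) (huv : u ≠ v)
    {p q : G.Walk u v} (hp : p.IsPath) (hq : q.IsPath)
    (hpC : ∀ w ∈ p.support, w ≠ u → w ≠ v → w ∈ C)
    (hqD : ∀ w ∈ q.support, w ≠ u → w ≠ v → w ∈ D)
    (hpch : ∀ i j : ℕ, i < j → j ≤ p.length → G.Adj (p.getVert i) (p.getVert j) → j = i + 1)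
    (hqch : ∀ i j : ℕ, i < j → j ≤ q.length → G.Adj (q.getVert i) (q.getVert j) → j = i + 1)
    (hp2 : 2 ≤ p.length) (hq2 : 2 ≤ q.length) :
    Nonempty (cycleGraph (p.length + q.length) ↪g G) := by
  set n := p.length + q.length with hndef
  set g : ℕ → V := fun k => if k < p.length then p.getVert k else q.getVert (n - k) with hgdef
  have hgp : ∀ k, k < p.length → g k = p.getVert k := fun k hk => if_pos hk
  have hgq : ∀ k, p.length ≤ k → g k = q.getVert (n - k) := fun k hk => if_neg (by omega)
  have hg0 : g 0 = u := by rw [hgp 0 (by omega), SimpleGraph.Walk.getVert_zero]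
  have hgL : g p.length = v := by
    rw [hgq p.length le_rfl, show n - p.length = q.length by omega,
      SimpleGraph.Walk.getVert_length]
  have hpint : ∀ k, 0 < k → k < p.length →
      p.getVert k ∈ C ∧ p.getVert k ≠ u ∧ p.getVert k ≠ v := by
    intro k h0 hk
    have hneu : p.getVert k ≠ u := by
      intro h
      have : k = 0 := IsPath.getVert_inj hp (by omega) (by omega)
        (by rw [SimpleGraph.Walk.getVert_zero]; exact h)
      omega
    have hnev : p.getVert k ≠ v := by
      intro h
      have : k = p.length := IsPath.getVert_inj hp (by omega) (by omega)
        (by rw [SimpleGraph.Walk.getVert_length]; exact h)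
      omega
    exact ⟨hpC _ (getVert_mem_support p k) hneu hnev, hneu, hnev⟩
  have hqint : ∀ k, 0 < k → k < q.length →
      q.getVert k ∈ D ∧ q.getVert k ≠ u ∧ q.getVert k ≠ v := by
    intro k h0 hk
    have hneu : q.getVert k ≠ u := by
      intro h
      have : k = 0 := IsPath.getVert_inj hq (by omega) (by omega)
        (by rw [SimpleGraph.Walk.getVert_zero]; exact h)
      omega
    have hnev : q.getVert k ≠ v := by
      intro h
      have : k = q.length := IsPath.getVert_inj hq (by omega) (by omega)
        (by rw [SimpleGraph.Walk.getVert_length]; exact h)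
      omega
    exact ⟨hqD _ (getVert_mem_support q k) hneu hnev, hneu, hnev⟩
  -- injectivity
  have mixed : ∀ k l, k < p.length → p.length ≤ l → l < n → g k ≠ g l := by
    intro k l hk hl hln
    rw [hgp k hk, hgq l hl]
    have hm1 : 1 ≤ n - l := by omega
    have hm2 : n - l ≤ q.length := by omega
    rcases Nat.eq_zero_or_pos k with rfl | hk0
    · rw [SimpleGraph.Walk.getVert_zero]
      rcases eq_or_lt_of_le hm2 with he | hlt
      · rw [he, SimpleGraph.Walk.getVert_length]
        exact huv
      · intro h
        exact huD (h ▸ (hqint _ hm1 hlt).1)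
    · rcases eq_or_lt_of_le hm2 with he | hlt
      · rw [he, SimpleGraph.Walk.getVert_length]
        exact (hpint k hk0 hk).2.2
      · exact (hCD _ _ (hpint k hk0 hk).1 (hqint _ hm1 hlt).1).1
  have hginj : ∀ k l, k < n → l < n → g k = g l → k = l := by
    intro k l hk hl he
    by_cases hkL : k < p.length <;> by_cases hlL : l < p.length
    · exact IsPath.getVert_inj hp (by omega) (by omega)
        (by rw [← hgp k hkL, ← hgp l hlL]; exact he)
    · exact absurd he (mixed k l hkL (by omega) hl)
    · exact absurd he.symm (mixed l k hlL (by omega) hk)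
    · have : n - k = n - l := IsPath.getVert_inj hq (by omega) (by omega)
        (by rw [← hgq k (by omega), ← hgq l (by omega)]; exact he)
      omega
  -- forward adjacency analysis
  have hfwd : ∀ k l, k < l → l < n → G.Adj (g k) (g l) →
      (l = k + 1 ∨ (k = 0 ∧ l + 1 = n)) := by
    intro k l hkl hln hadj
    by_cases hlL : l ≤ p.length
    · have hgl : g l = p.getVert l := by
        rcases lt_or_eq_of_le hlL with h | h
        · exact hgp l h
        · rw [h, hgL, SimpleGraph.Walk.getVert_length]
      left
      exact hpch k l hkl (by omega) (by rw [← hgp k (by omega), ← hgl]; exact hadj)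
    · have hgl : g l = q.getVert (n - l) := hgq l (by omega)
      by_cases hkL : k < p.length
      · rcases Nat.eq_zero_or_pos k with rfl | hk0
        · right
          have hadj' : G.Adj (q.getVert 0) (q.getVert (n - l)) := by
            rw [hg0, hgl] at hadj
            rw [SimpleGraph.Walk.getVert_zero]
            exact hadj
          have := hqch 0 (n - l) (by omega) (by omega) hadj'
          omega
        · exfalso
          have hxC := (hpint k hk0 hkL).1
          have hyD := (hqint (n - l) (by omega) (by omega)).1
          exact (hCD _ _ hxC hyD).2 (by rw [← hgp k hkL, ← hgl]; exact hadj)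
      · have hgk : g k = q.getVert (n - k) := hgq k (by omega)
        have hadj' : G.Adj (q.getVert (n - l)) (q.getVert (n - k)) := by
          rw [← hgk, ← hgl]; exact hadj.symm
        have := hqch (n - l) (n - k) (by omega) (by omega) hadj'
        left; omega
  -- backward: consecutive vertices are adjacent
  have hsucc : ∀ k, k + 1 < n → G.Adj (g k) (g (k + 1)) := by
    intro k hk1
    by_cases h1 : k + 1 < p.length
    · rw [hgp k (by omega), hgp (k + 1) h1]
      exact p.adj_getVert_succ (by omega)
    · by_cases h2 : k + 1 = p.length
      · have hgk1 : g (k + 1) = p.getVert (k + 1) := by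
          rw [h2, hgL, SimpleGraph.Walk.getVert_length]
        rw [hgp k (by omega), hgk1]
        exact p.adj_getVert_succ (by omega)
      · rw [hgq k (by omega), hgq (k + 1) (by omega),
          show n - k = (n - (k + 1)) + 1 by omega]
        exact (q.adj_getVert_succ (by omega)).symm
  have hwrap : G.Adj (g 0) (g (n - 1)) := by
    have h := q.adj_getVert_succ (show 0 < q.length by omega)
    rw [SimpleGraph.Walk.getVert_zero] at h
    rw [hg0, hgq (n - 1) (by omega), show n - (n - 1) = 1 by omega]
    exact h
  -- assemble the embedding
  refine ⟨⟨⟨fun i => g i.val, fun ⦃i j⦄ hij => Fin.ext (hginj _ _ i.isLt j.isLt hij)⟩, ?_⟩⟩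
  intro i j
  change G.Adj (g i.val) (g j.val) ↔ _
  rw [cyc_adj_nat i j (by omega)]
  constructor
  · intro h
    rcases lt_trichotomy i.val j.val with hlt | heq | hlt
    · rcases hfwd _ _ hlt j.isLt h with h1 | h1 <;> [omega; (have := j.isLt; omega)]
    · exfalso
      rw [heq] at h
      exact G.loopless.irrefl _ h
    · rcases hfwd _ _ hlt i.isLt h.symm with h1 | h1 <;> [omega; (have := i.isLt; omega)]
  · intro h
    rcases h with h | h | h | h
    · rw [h]
      exact hsucc _ (by have := j.isLt; omega)
    · rw [h]
      exact (hsucc _ (by have := i.isLt; omega)).symm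
    · rw [h.1, h.2]
      exact hwrap
    · rw [h.1, h.2]
      exact hwrap.symm


end St8

theorem stmt8 {V : Type*} [Fintype V] (G : SimpleGraph V)
    (c : ℕ) (hc : 3 ≤ c) (hch : ChordalityAtMost G c)
    (s t : V) (hst : s ≠ t) (hadj : ¬ G.Adj s t)
    (S : Set V) (hS : IsMinimalSep G s t S)
    (u v : V) (hu : u ∈ S) (hv : v ∈ S) (huv : u ≠ v) (hnadj : ¬ G.Adj u v) :
    (∃ p : G.Walk u v, p.IsPath ∧ p.length ≤ (c + 1) / 2 ∧
      ∀ w ∈ p.support, w ≠ u → w ≠ v → w ∈ CompOf G S s) ∨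
    (∃ p : G.Walk u v, p.IsPath ∧ p.length ≤ (c + 1) / 2 ∧
      ∀ w ∈ p.support, w ≠ u → w ≠ v → w ∈ CompOf G S t) := by

  classical
  have hsep := hS.1
  -- basic separation facts
  have hcross : ∀ a b : V, a ∈ CompOf G S s → b ∈ CompOf G S t → a ≠ b ∧ ¬ G.Adj a b :=
    fun a b ha hb => St8.compOf_cross hsep ha hb
  have huCt : u ∉ CompOf G S t := fun h => St8.compOf_not_mem h hu
  have hvCs : v ∉ CompOf G S s := fun h => St8.compOf_not_mem h hv
  -- neighbors of u and v in both components
  obtain ⟨⟨au, hau, hauC⟩, ⟨bu, hbu, hbuC⟩⟩ := St8.minimal_sep_neighbors hS hu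
  obtain ⟨⟨av, hav, havC⟩, ⟨bv, hbv, hbvC⟩⟩ := St8.minimal_sep_neighbors hS hv
  -- existence of paths with prescribed internal vertices
  have hex : ∀ (r a b : V), G.Adj a u → G.Adj b v → a ∈ CompOf G S r → b ∈ CompOf G S r →
      ∃ m, ∃ pp : G.Walk u v, pp.IsPath ∧
        (∀ w ∈ pp.support, w ≠ u → w ≠ v → w ∈ CompOf G S r) ∧ pp.length = m := by
    intro r a b ha hb haC hbC
    obtain ⟨w0, hw0⟩ := St8.compOf_walk haC hbC
    set p0 : G.Walk u v :=
      SimpleGraph.Walk.cons ha.symm (w0.append (SimpleGraph.Walk.cons hb .nil)) with hp0def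
    have hp0 : ∀ y ∈ p0.support, y ≠ u → y ≠ v → y ∈ CompOf G S r := by
      intro y hy hyu hyv
      rw [hp0def, SimpleGraph.Walk.support_cons] at hy
      rcases List.mem_cons.1 hy with rfl | hy
      · exact absurd rfl hyu
      rw [SimpleGraph.Walk.support_append] at hy
      rcases List.mem_append.1 hy with h | h
      · exact hw0 y h
      · exfalso
        apply hyv
        simpa using h
    exact ⟨_, (p0.toPath : G.Walk u v), p0.toPath.2,
      fun w hw hwu hwv => hp0 w (p0.support_toPath_subset hw) hwu hwv, rfl⟩
  have hes := hex s au av hau hav hauC havC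
  have het := hex t bu bv hbu hbv hbuC hbvC
  obtain ⟨ps, hpsP, hpsI, hpsL⟩ := Nat.find_spec hes
  obtain ⟨pt, hptP, hptI, hptL⟩ := Nat.find_spec het
  have hmins : ∀ q : G.Walk u v, q.IsPath →
      (∀ w ∈ q.support, w ≠ u → w ≠ v → w ∈ CompOf G S s) → ps.length ≤ q.length := by
    intro q h1 h2
    rw [hpsL]
    exact Nat.find_min' hes ⟨q, h1, h2, rfl⟩
  have hmint : ∀ q : G.Walk u v, q.IsPath →
      (∀ w ∈ q.support, w ≠ u → w ≠ v → w ∈ CompOf G S t) → pt.length ≤ q.length := by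
    intro q h1 h2
    rw [hptL]
    exact Nat.find_min' het ⟨q, h1, h2, rfl⟩
  -- both paths have length at least 2
  have hlen2 : ∀ p : G.Walk u v, 2 ≤ p.length ∨ p.length = 1 ∨ p.length = 0 := fun p => by omega
  have htwo : ∀ p : G.Walk u v, 2 ≤ p.length := by
    intro p
    rcases hlen2 p with h | h | h
    · exact h
    · exfalso
      have hadj1 := p.adj_getVert_succ (i := 0) (by omega)
      rw [SimpleGraph.Walk.getVert_zero, show (0 : ℕ) + 1 = p.length by omega,
        SimpleGraph.Walk.getVert_length] at hadj1
      exact hnadj hadj1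
    · exact absurd (SimpleGraph.Walk.eq_of_length_eq_zero h) huv
  by_cases hcs : ps.length ≤ (c + 1) / 2
  · exact Or.inl ⟨ps, hpsP, hcs, hpsI⟩
  by_cases hct : pt.length ≤ (c + 1) / 2
  · exact Or.inr ⟨pt, hptP, hct, hptI⟩
  -- otherwise build a long induced cycle, contradiction with chordality
  exfalso
  have hchs : ∀ i j : ℕ, i < j → j ≤ ps.length →
      G.Adj (ps.getVert i) (ps.getVert j) → j = i + 1 :=
    fun i j h1 h2 h3 => St8.chord hpsP hmins hpsI h1 h2 h3
  have hcht : ∀ i j : ℕ, i < j → j ≤ pt.length →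
      G.Adj (pt.getVert i) (pt.getVert j) → j = i + 1 :=
    fun i j h1 h2 h3 => St8.chord hptP hmint hptI h1 h2 h3
  obtain ⟨emb⟩ := St8.cycle_embed hcross huCt hvCs huv hpsP hptP hpsI hptI hchs hcht
    (htwo ps) (htwo pt)
  exact (hch (ps.length + pt.length) (by omega)).false emb
end

section
/- Let G be a finite simple chordal bipartite graph, let s, t be nonadjacent distinct vertices of G, and let S be a minimal (s,t)-vertex separator such that the subgraph of G induced on S is an independent set. Let C_s and C_t be the connected components of G − S containing s and t respectively. Then there exists a vertex u in C_s with S ⊆ N_G(u) and there exists a vertex v in C_t with S ⊆ N_G(v). -/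
open SimpleGraph

section Aux
variable {V : Type*} {G : SimpleGraph V} {S : Set V} {s t u v x : V}

lemma compOf_self (hs : s ∉ S) : s ∈ CompOf G S s :=
  ⟨Walk.nil, by intro w hw; simp at hw; subst hw; exact hs⟩

lemma compOf_not_mem (h : v ∈ CompOf G S s) : v ∉ S := by
  obtain ⟨p, hp⟩ := h
  exact hp v p.end_mem_support

lemma compOf_adj (hu : u ∈ CompOf G S s) (h : G.Adj u v) (hv : v ∉ S) :
    v ∈ CompOf G S s := by
  obtain ⟨p, hp⟩ := hu
  refine ⟨p.concat h, ?_⟩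
  intro w hw
  rw [Walk.support_concat] at hw
  rcases (by simpa using hw : w ∈ p.support ∨ w = v) with hw | hw
  · exact hp w hw
  · subst hw; exact hv

lemma isSep_symm (h : IsSep G s t S) : IsSep G t s S := by
  obtain ⟨h1, h2, h3⟩ := h
  refine ⟨h2, h1, fun p => ?_⟩
  obtain ⟨w, hw, hwS⟩ := h3 p.reverse
  exact ⟨w, by simpa [Walk.support_reverse] using hw, hwS⟩

lemma compOf_no_cross (hS : IsSep G s t S) (hu : u ∈ CompOf G S s)
    (hv : v ∈ CompOf G S t) : ¬ G.Adj u v := by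
  intro hadj
  obtain ⟨p, hp⟩ := hu
  obtain ⟨q, hq⟩ := hv
  obtain ⟨w, hw, hwS⟩ := hS.2.2 (p.append (Walk.cons hadj q.reverse))
  rw [Walk.mem_support_append_iff] at hw
  rcases hw with hw | hw
  · exact hp w hw hwS
  · rw [Walk.support_cons, List.mem_cons] at hw
    rcases hw with hw | hw
    · exact hp u p.end_mem_support (hw ▸ hwS)
    · exact hq w (by simpa [Walk.support_reverse] using hw) hwS

lemma compOf_disjoint (hS : IsSep G s t S) (hu : u ∈ CompOf G S s)
    (hv : u ∈ CompOf G S t) : False := by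
  obtain ⟨p, hp⟩ := hu
  obtain ⟨q, hq⟩ := hv
  obtain ⟨w, hw, hwS⟩ := hS.2.2 (p.append q.reverse)
  rw [Walk.mem_support_append_iff] at hw
  rcases hw with hw | hw
  · exact hp w hw hwS
  · exact hq w (by simpa [Walk.support_reverse] using hw) hwS

lemma walk_prefix_mem (p : G.Walk s v) (hp : WalkAvoids p S) (hw : u ∈ p.support) :
    u ∈ CompOf G S s := by
  classical
  exact ⟨p.takeUntil u hw, fun w hw' => hp w (p.support_takeUntil_subset hw hw')⟩


end Aux

section Aux2
variable {V : Type*} {G : SimpleGraph V} {S : Set V} {s t u v x : V}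

lemma isMinimalSep_symm (h : IsMinimalSep G s t S) : IsMinimalSep G t s S :=
  ⟨isSep_symm h.1, fun S' hS' hsep => h.2 S' hS' (isSep_symm hsep)⟩

/-- every vertex of a minimal separator has a neighbor in the component of s -/
lemma minimalSep_neighbor (hS : IsMinimalSep G s t S) (hx : x ∈ S) :
    ∃ a ∈ CompOf G S s, G.Adj x a := by
  classical
  obtain ⟨⟨hsS, htS, hsep⟩, hmin⟩ := hS
  have hssub : S \ {x} ⊂ S := Set.sdiff_singleton_ssubset.mpr hx
  have hnot := hmin _ hssub
  rw [IsSep] at hnot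
  push_neg at hnot
  obtain ⟨p, hp⟩ := hnot (by simp [hsS]) (by simp [htS])
  -- every vertex of p in S equals x
  have hponly : ∀ w ∈ p.support, w ∈ S → w = x := by
    intro w hw hwS
    by_contra hne
    exact hp w hw ⟨hwS, hne⟩
  obtain ⟨w, hw, hwS⟩ := hsep p
  have hxp : x ∈ p.support := hponly w hw hwS ▸ hw
  set q := p.takeUntil x hxp with hq
  have hqsub : q.support ⊆ p.support := p.support_takeUntil_subset hxp
  have hqcount : q.support.count x = 1 := p.count_support_takeUntil_eq_one hxp
  have hxs : x ≠ s := fun h => hsS (h ▸ hx)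
  have hnn : ¬ q.reverse.Nil := by
    rw [Walk.nil_iff_length_eq, Walk.length_reverse]
    intro h
    exact hxs (Walk.eq_of_length_eq_zero h).symm
  obtain ⟨a, hadj, r, hrev⟩ := Walk.not_nil_iff.mp hnn
  have hxnr : x ∉ r.support := by
    have : q.reverse.support = x :: r.support := by rw [hrev, Walk.support_cons]
    have hc : (x :: r.support).count x = 1 := by
      rw [← this, Walk.support_reverse, List.count_reverse, hqcount]
    intro hmem
    have h1 : (x :: r.support).count x = r.support.count x + 1 := List.count_cons_self
    have h2 : 0 < r.support.count x := List.count_pos_iff.mpr hmem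
    omega
  have hravoid : ∀ w ∈ r.support, w ∉ S := by
    intro w hwr hwS
    have hwq : w ∈ q.support := by
      rw [← List.mem_reverse, ← Walk.support_reverse, hrev, Walk.support_cons]
      exact List.mem_cons_of_mem _ hwr
    exact hxnr ((hponly w (hqsub hwq) hwS) ▸ hwr)
  exact ⟨a, ⟨r.reverse, fun w hw => hravoid w (by simpa [Walk.support_reverse] using hw)⟩, hadj⟩

end Aux2

lemma exists_minChain {V : Type*} {G : SimpleGraph V} (C : Set V) {x y : V}
    (hxy : x ≠ y) (hnadj : ¬ G.Adj x y) (hxC : x ∉ C) (hyC : y ∉ C)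
    (hex : ∃ n, ∃ f : ℕ → V, f 0 = x ∧ f n = y ∧ (∀ i < n, G.Adj (f i) (f (i+1))) ∧
      (∀ i, 0 < i → i < n → f i ∈ C ∪ {x, y})) :
    ∃ k, ∃ f : ℕ → V, 2 ≤ k ∧ f 0 = x ∧ f k = y ∧ (∀ i < k, G.Adj (f i) (f (i+1))) ∧
      (∀ i, 0 < i → i < k → f i ∈ C) ∧
      (∀ i j, i < j → j ≤ k → f i ≠ f j) ∧
      (∀ i j, i + 1 < j → j ≤ k → ¬ G.Adj (f i) (f j)) := by
  classical
  set P : ℕ → Prop := fun n => ∃ f : ℕ → V, f 0 = x ∧ f n = y ∧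
      (∀ i < n, G.Adj (f i) (f (i+1))) ∧ (∀ i, 0 < i → i < n → f i ∈ C ∪ {x, y}) with hP
  obtain ⟨n, hn⟩ := hex
  have hPn : P n := hn
  obtain ⟨k, hPk, hmin⟩ : ∃ k, P k ∧ ∀ m < k, ¬ P m :=
    ⟨Nat.find ⟨n, hPn⟩, Nat.find_spec ⟨n, hPn⟩, fun m hm => Nat.find_min ⟨n, hPn⟩ hm⟩
  obtain ⟨f, h0, hky, hadj, hC⟩ := hPk
  -- injectivity
  have hinj : ∀ i j, i < j → j ≤ k → f i ≠ f j := by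
    intro i j hij hjk heq
    have hd : i + (j - i) = j := by omega
    refine hmin (k - (j - i)) (by omega) ⟨fun m => if m < i then f m else f (m + (j - i)), ?_, ?_, ?_, ?_⟩ <;> beta_reduce
    · by_cases h : 0 < i
      · rw [if_pos h]; exact h0
      · have hi0 : i = 0 := by omega
        rw [if_neg (by omega)]
        rw [(by omega : 0 + (j - i) = j), ← heq, hi0]; exact h0
    · rw [if_neg (by omega), (by omega : k - (j - i) + (j - i) = k)]; exact hky
    · intro m hm
      by_cases h1 : m + 1 < i
      · rw [if_pos (by omega), if_pos h1]; exact hadj m (by omega)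
      · by_cases h2 : m < i
        · rw [if_pos h2, if_neg h1, (by omega : m + 1 + (j - i) = j), ← heq,
            (by omega : i = m + 1)]
          exact hadj m (by omega)
        · rw [if_neg h2, if_neg (by omega), (by omega : m + 1 + (j - i) = m + (j - i) + 1)]
          exact hadj (m + (j - i)) (by omega)
    · intro m hm1 hm2
      by_cases h2 : m < i
      · rw [if_pos h2]; exact hC m hm1 (by omega)
      · rw [if_neg h2]; exact hC (m + (j - i)) (by omega) (by omega)
  -- chordlessness
  have hchord : ∀ i j, i + 1 < j → j ≤ k → ¬ G.Adj (f i) (f j) := by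
    intro i j hij hjk hA
    refine hmin (k - (j - i - 1)) (by omega)
      ⟨fun m => if m ≤ i then f m else f (m + (j - i - 1)), ?_, ?_, ?_, ?_⟩ <;> beta_reduce
    · rw [if_pos (by omega)]; exact h0
    · rw [if_neg (by omega), (by omega : k - (j - i - 1) + (j - i - 1) = k)]; exact hky
    · intro m hm
      by_cases h1 : m + 1 ≤ i
      · rw [if_pos (by omega), if_pos h1]; exact hadj m (by omega)
      · by_cases h2 : m ≤ i
        · rw [if_pos h2, if_neg h1, (by omega : m + 1 + (j - i - 1) = j + (m - i)),
            (by omega : j + (m - i) = j), (by omega : m = i)]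
          exact hA
        · rw [if_neg h2, if_neg (by omega), (by omega : m + 1 + (j - i - 1) = m + (j - i - 1) + 1)]
          exact hadj (m + (j - i - 1)) (by omega)
    · intro m hm1 hm2
      by_cases h2 : m ≤ i
      · rw [if_pos h2]; exact hC m hm1 (by omega)
      · rw [if_neg h2]; exact hC (m + (j - i - 1)) (by omega) (by omega)
  have hk0 : k ≠ 0 := fun h => hxy (by rw [← h0, ← hky, h])
  have hk1 : k ≠ 1 := fun h => hnadj (by rw [← h0, ← hky, h]; exact hadj 0 (by omega))
  refine ⟨k, f, by omega, h0, hky, hadj, ?_, hinj, hchord⟩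
  intro i hi1 hi2
  rcases hC i hi1 hi2 with h | h
  · exact h
  · exfalso
    rcases h with h | h
    · exact hinj 0 i hi1 (by omega) (by rw [h0, h])
    · exact hinj i k hi2 (le_refl k) (by rw [hky]; exact h)


lemma fin_sub_one_iff {m : ℕ} (a b : Fin (m+2)) :
    b - a = 1 ↔ (b.val = a.val + 1 ∨ (a.val = m + 1 ∧ b.val = 0)) := by
  have h1 : b - a = 1 ↔ b = a + 1 := by rw [sub_eq_iff_eq_add, add_comm 1 a]
  rw [h1, Fin.ext_iff, Fin.val_add_one]
  rcases eq_or_ne a (Fin.last (m+1)) with h | h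
  · rw [if_pos h]
    have ha : a.val = m + 1 := by rw [h]; rfl
    have hb := b.isLt
    omega
  · rw [if_neg h]
    have ha : a.val ≠ m + 1 := fun hv => h (Fin.ext (by rw [hv, Fin.val_last]))
    have hb := b.isLt
    omega

lemma cycle_embedding {V : Type*} {G : SimpleGraph V} (n : ℕ) (hn : 3 ≤ n) (h : ℕ → V)
    (hinj : ∀ i j, i < j → j < n → h i ≠ h j)
    (hadj : ∀ i, i + 1 < n → G.Adj (h i) (h (i+1)))
    (hwrap : G.Adj (h (n-1)) (h 0))
    (hchord : ∀ i j, i < j → j < n → G.Adj (h i) (h j) → j = i + 1 ∨ (i = 0 ∧ j = n - 1)) :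
    Nonempty (cycleGraph n ↪g G) := by
  obtain ⟨m, rfl⟩ : ∃ m, n = m + 2 := ⟨n - 2, by omega⟩
  refine ⟨⟨⟨fun a => h a.val, ?_⟩, ?_⟩⟩
  · intro a b hab
    simp only at hab
    rcases lt_trichotomy a.val b.val with hlt | heq | hlt
    · exact absurd hab (hinj _ _ hlt b.isLt)
    · exact Fin.ext heq
    · exact absurd hab.symm (hinj _ _ hlt a.isLt)
  · intro a b
    show G.Adj (h a.val) (h b.val) ↔ (cycleGraph (m+2)).Adj a b
    rw [cycleGraph_adj, fin_sub_one_iff b a, fin_sub_one_iff a b]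
    constructor
    · intro hG
      have hne : a.val ≠ b.val := by
        intro hv
        have hab : a = b := Fin.ext hv
        subst hab
        exact G.loopless.irrefl _ hG
      rcases lt_trichotomy a.val b.val with hlt | heq | hlt
      · rcases hchord a.val b.val hlt b.isLt hG with h' | ⟨h1, h2⟩
        · exact Or.inr (Or.inl h')
        · exact Or.inl (Or.inr ⟨by omega, h1⟩)
      · exact absurd heq hne
      · rcases hchord b.val a.val hlt a.isLt hG.symm with h' | ⟨h1, h2⟩
        · exact Or.inl (Or.inl h')
        · exact Or.inr (Or.inr ⟨by omega, h1⟩)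
    · rintro ((h' | ⟨h1, h2⟩) | (h' | ⟨h1, h2⟩))
      · rw [h']; exact (hadj b.val (by have := a.isLt; omega)).symm
      · rw [h1, h2, (by omega : m + 1 = m + 2 - 1)]; exact hwrap.symm
      · rw [h']; exact hadj a.val (by have := b.isLt; omega)
      · rw [h2, h1, (by omega : m + 1 = m + 2 - 1)]; exact hwrap

lemma no_induced_C6 {V : Type*} {G : SimpleGraph V} (hch : ChordalityAtMost G 5)
    {a b c d e f : V}
    (hab : G.Adj a b) (hbc : G.Adj b c) (hcd : G.Adj c d) (hde : G.Adj d e)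
    (hef : G.Adj e f) (hfa : G.Adj f a)
    (hac : ¬G.Adj a c) (had : ¬G.Adj a d) (hae : ¬G.Adj a e)
    (hbd : ¬G.Adj b d) (hbe : ¬G.Adj b e) (hbf : ¬G.Adj b f)
    (hce : ¬G.Adj c e) (hcf : ¬G.Adj c f) (hdf : ¬G.Adj d f)
    (nac : a ≠ c) (nad : a ≠ d) (nae : a ≠ e)
    (nbd : b ≠ d) (nbe : b ≠ e) (nbf : b ≠ f)
    (nce : c ≠ e) (ncf : c ≠ f) (ndf : d ≠ f) : False := by
  set h : ℕ → V := fun i => [a,b,c,d,e,f].getD i a with hh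
  have h0 : h 0 = a := rfl
  have h1 : h 1 = b := rfl
  have h2 : h 2 = c := rfl
  have h3 : h 3 = d := rfl
  have h4 : h 4 = e := rfl
  have h5 : h 5 = f := rfl
  refine (hch 6 (by omega)).false (Classical.choice (cycle_embedding 6 (by omega) h ?_ ?_ ?_ ?_))
  · intro i j hij hj
    interval_cases j <;> interval_cases i <;>
      simp only [h0, h1, h2, h3, h4, h5] <;>
      first
        | exact hab.ne | exact hbc.ne | exact hcd.ne | exact hde.ne | exact hef.ne
        | exact hfa.ne.symm | exact nac | exact nad | exact nae | exact nbd | exact nbe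
        | exact nbf | exact nce | exact ncf | exact ndf
  · intro i hi
    have hi5 : i < 5 := by omega
    clear hi
    interval_cases i <;> simp only [h0, h1, h2, h3, h4, h5] <;>
      first | exact hab | exact hbc | exact hcd | exact hde | exact hef
  · simpa only [h0, h5] using hfa
  · intro i j hij hj hG
    interval_cases j <;> interval_cases i <;>
      simp only [h0, h1, h2, h3, h4, h5] at hG <;>
      first
        | omega
        | exact absurd hG hac | exact absurd hG had | exact absurd hG hae
        | exact absurd hG hbd | exact absurd hG hbe | exact absurd hG hbf
        | exact absurd hG hce | exact absurd hG hcf | exact absurd hG hdf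

lemma chain_parity {V : Type*} {G : SimpleGraph V} (col : G.Coloring (Fin 2))
    {f : ℕ → V} {k : ℕ} (hadj : ∀ i < k, G.Adj (f i) (f (i+1))) :
    ∀ i, i ≤ k → (col (f i) = col (f 0) ↔ Even i) := by
  intro i
  induction i with
  | zero => simp
  | succ i ih =>
    intro hik
    have hprev := ih (by omega)
    have hne : col (f (i+1)) ≠ col (f i) := (col.valid (hadj i (by omega))).symm
    rw [Nat.even_add_one, ← hprev]
    revert hne
    generalize col (f (i+1)) = p
    generalize col (f i) = q
    generalize col (f 0) = r
    intro hne
    fin_cases p <;> fin_cases q <;> fin_cases r <;> simp_all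


lemma side_chain {V : Type*} {G : SimpleGraph V} {s t : V} {S : Set V}
    (hS : IsMinimalSep G s t S) {x y : V} (hx : x ∈ S) (hy : y ∈ S) (hxy : x ≠ y)
    (hnadj : ¬ G.Adj x y) :
    ∃ k, ∃ f : ℕ → V, 2 ≤ k ∧ f 0 = x ∧ f k = y ∧ (∀ i < k, G.Adj (f i) (f (i+1))) ∧
      (∀ i, 0 < i → i < k → f i ∈ CompOf G S s) ∧
      (∀ i j, i < j → j ≤ k → f i ≠ f j) ∧
      (∀ i j, i + 1 < j → j ≤ k → ¬ G.Adj (f i) (f j)) := by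
  obtain ⟨a, ha, hxa⟩ := minimalSep_neighbor hS hx
  obtain ⟨b, hb, hyb⟩ := minimalSep_neighbor hS hy
  obtain ⟨pa, hpa⟩ := ha
  obtain ⟨pb, hpb⟩ := hb
  set mid : G.Walk a b := pa.reverse.append pb with hmid
  set p : G.Walk x y := Walk.cons hxa (mid.concat hyb.symm) with hp
  have hsupp : ∀ w ∈ p.support, w ∈ CompOf G S s ∪ {x, y} := by
    intro w hw
    rw [hp, Walk.support_cons] at hw
    rcases List.mem_cons.mp hw with hw | hw
    · right; left; exact hw
    · rw [Walk.support_concat] at hw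
      rcases (by simpa using hw : w ∈ mid.support ∨ w = y) with hw | hw
      · rw [hmid] at hw
        rcases (Walk.mem_support_append_iff pa.reverse pb).mp hw with hw | hw
        · left
          exact walk_prefix_mem pa hpa (by simpa [Walk.support_reverse] using hw)
        · left; exact walk_prefix_mem pb hpb hw
      · right; right; simp [hw]
  refine exists_minChain (CompOf G S s) hxy hnadj
    (fun hc => compOf_not_mem hc hx) (fun hc => compOf_not_mem hc hy)
    ⟨p.length, p.getVert, p.getVert_zero, p.getVert_length, ?_, ?_⟩
  · intro i hi; exact p.adj_getVert_succ hi
  · intro i _ hi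
    exact hsupp _ (Walk.mem_support_iff_exists_getVert.mpr ⟨i, rfl, by omega⟩)

lemma fin2_eq_of_ne (p q r : Fin 2) (h1 : p ≠ r) (h2 : q ≠ r) : p = q := by
  fin_cases p <;> fin_cases q <;> fin_cases r <;> simp_all

lemma pair_common {V : Type*} {G : SimpleGraph V} (hch : ChordalityAtMost G 5)
    (col : G.Coloring (Fin 2)) {s t : V} {S : Set V}
    (hS : IsMinimalSep G s t S) (hind : ∀ u ∈ S, ∀ v ∈ S, ¬ G.Adj u v)
    {x y : V} (hx : x ∈ S) (hy : y ∈ S) (hxy : x ≠ y) :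
    (∃ w ∈ CompOf G S s, G.Adj w x ∧ G.Adj w y) ∧
    (∃ v ∈ CompOf G S t, G.Adj v x ∧ G.Adj v y) := by
  have hsep := hS.1
  have hsep' := isSep_symm hsep
  have hnadj : ¬ G.Adj x y := hind x hx y hy
  obtain ⟨p, f, hp2, hf0, hfp, hfadj, hfC, hfinj, hfch⟩ := side_chain hS hx hy hxy hnadj
  obtain ⟨q, g, hq2, hg0, hgq, hgadj, hgC, hginj, hgch⟩ :=
    side_chain (isMinimalSep_symm hS) hx hy hxy hnadj
  -- parity
  have hpar : p % 2 = q % 2 := by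
    have h1 := chain_parity col hfadj p le_rfl
    have h2 := chain_parity col hgadj q le_rfl
    rw [hfp, hf0] at h1
    rw [hgq, hg0] at h2
    have : Even p ↔ Even q := by rw [← h1, ← h2]
    rcases Nat.even_or_odd p with he | ho
    · have := this.mp he
      rw [Nat.even_iff] at he this; omega
    · rw [Nat.odd_iff] at ho
      rcases Nat.even_or_odd q with hqe | hqo
      · have h4 := this.mpr hqe
        rw [Nat.even_iff] at h4 hqe; omega
      · rw [Nat.odd_iff] at hqo; omega
  by_cases hsmall : p = 2 ∧ q = 2
  · obtain ⟨hp, hq⟩ := hsmall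
    subst hp; subst hq
    refine ⟨⟨f 1, hfC 1 one_pos one_lt_two, ?_, ?_⟩, ⟨g 1, hgC 1 one_pos one_lt_two, ?_, ?_⟩⟩
    · rw [← hf0]; exact (hfadj 0 (by omega)).symm
    · rw [← hfp]; exact hfadj 1 (by omega)
    · rw [← hg0]; exact (hgadj 0 (by omega)).symm
    · rw [← hgq]; exact hgadj 1 (by omega)
  · exfalso
    have hn6 : 6 ≤ p + q := by omega
    set n := p + q with hn
    set h : ℕ → V := fun m => if m ≤ p then f m else g (p + q - m) with hh
    have hval : ∀ m, m ≤ p → h m = f m := by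
      intro m hm; rw [hh]; beta_reduce; rw [if_pos hm]
    have hval' : ∀ m, p < m → h m = g (p + q - m) := by
      intro m hm; rw [hh]; beta_reduce; rw [if_neg (by omega)]
    -- disjointness facts
    have hdisj : ∀ a, a ∈ CompOf G S s → a ∈ CompOf G S t → False :=
      fun a h1 h2 => compOf_disjoint hsep h1 h2
    have hcross : ∀ a b, a ∈ CompOf G S s → b ∈ CompOf G S t → ¬ G.Adj a b :=
      fun a b h1 h2 => compOf_no_cross hsep h1 h2
    have hxCs : ∀ m, 0 < m → m < p → f m ≠ x := fun m h1 h2 he => (hfinj 0 m h1 (by omega)) (by rw [hf0, he])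
    -- injectivity of h
    have hinj : ∀ i j, i < j → j < n → h i ≠ h j := by
      intro i j hij hjn heq
      by_cases hip : i ≤ p <;> by_cases hjp : j ≤ p
      · rw [hval i hip, hval j hjp] at heq
        exact hfinj i j hij hjp heq
      · rw [hval i hip, hval' j (by omega)] at heq
        have hl1 : 1 ≤ p + q - j := by omega
        have hl2 : p + q - j ≤ q - 1 := by omega
        rcases Nat.lt_trichotomy i 0 with h' | h' | h'
        · omega
        · rw [h', hf0, ← hg0] at heq
          exact hginj 0 (p + q - j) (by omega) (by omega) heq
        · by_cases hi' : i = p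
          · rw [hi', hfp, ← hgq] at heq
            exact hginj (p + q - j) q (by omega) le_rfl heq.symm
          · exact hdisj _ (hfC i h' (by omega)) (heq ▸ hgC (p + q - j) (by omega) (by omega))
      · omega
      · rw [hval' i (by omega), hval' j (by omega)] at heq
        exact hginj (p + q - j) (p + q - i) (by omega) (by omega) heq.symm
    -- consecutive adjacency
    have hadj : ∀ i, i + 1 < n → G.Adj (h i) (h (i+1)) := by
      intro i hi
      by_cases hip : i + 1 ≤ p
      · rw [hval i (by omega), hval (i+1) hip]
        exact hfadj i (by omega)
      · by_cases hi' : i = p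
        · rw [hval i (by omega : i ≤ p), hval' (i+1) (by omega), hi', hfp, ← hgq,
            (by omega : p + q - (p + 1) = q - 1)]
          have := hgadj (q-1) (by omega)
          rw [(by omega : q - 1 + 1 = q)] at this
          exact this.symm
        · rw [hval' i (by omega), hval' (i+1) (by omega)]
          have := hgadj (p + q - (i+1)) (by omega)
          rw [(by omega : p + q - (i + 1) + 1 = p + q - i)] at this
          exact this.symm
    -- wrap
    have hwrap : G.Adj (h (n-1)) (h 0) := by
      rw [hval 0 (by omega), hf0, ← hg0, hval' (n-1) (by omega), (by omega : p + q - (n - 1) = 1)]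
      exact (hgadj 0 (by omega)).symm
    -- chords
    have hchord : ∀ i j, i < j → j < n → G.Adj (h i) (h j) → j = i + 1 ∨ (i = 0 ∧ j = n - 1) := by
      intro i j hij hjn hA
      by_cases hip : i ≤ p <;> by_cases hjp : j ≤ p
      · rw [hval i hip, hval j hjp] at hA
        by_cases hcons : j = i + 1
        · exact Or.inl hcons
        · exact absurd hA (hfch i j (by omega) hjp)
      · rw [hval i hip, hval' j (by omega)] at hA
        have hl1 : 1 ≤ p + q - j := by omega
        have hl2 : p + q - j ≤ q - 1 := by omega
        rcases Nat.lt_trichotomy i 0 with h' | h' | h'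
        · omega
        · subst h'
          rw [hf0, ← hg0] at hA
          by_cases hl : p + q - j = 1
          · exact Or.inr ⟨rfl, by omega⟩
          · exact absurd hA (hgch 0 (p + q - j) (by omega) (by omega))
        · by_cases hi' : i = p
          · rw [hi', hfp, ← hgq] at hA
            by_cases hl : p + q - j = q - 1
            · left; omega
            · exact absurd hA.symm (hgch (p + q - j) q (by omega) le_rfl)
          · exact absurd hA (hcross _ _ (hfC i h' (by omega)) (hgC (p + q - j) (by omega) (by omega)))
      · omega
      · rw [hval' i (by omega), hval' j (by omega)] at hA
        by_cases hcons : j = i + 1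
        · exact Or.inl hcons
        · refine absurd hA.symm (hgch (p + q - j) (p + q - i) (by omega) (by omega))
    exact (hch n (by omega)).false
      (Classical.choice (cycle_embedding n (by omega) h hinj hadj hwrap hchord))

section Upgrade
variable {V : Type*} {G : SimpleGraph V} {s t : V} {S : Set V}

lemma same_side_not_adj (col : G.Coloring (Fin 2)) {a b c : V}
    (h1 : G.Adj a c) (h2 : G.Adj b c) : ¬ G.Adj a b := fun hab =>
  (col.valid hab) (fin2_eq_of_ne _ _ _ (col.valid h1) (col.valid h2))

lemma comp_ne_sep {a b : V} (ha : a ∈ CompOf G S s) (hb : b ∈ S) : a ≠ b := by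
  intro he; subst he; exact compOf_not_mem ha hb

lemma upgrade (hch : ChordalityAtMost G 5) (col : G.Coloring (Fin 2))
    (hsep : IsSep G s t S) (hind : ∀ u ∈ S, ∀ v ∈ S, ¬ G.Adj u v)
    {x y z u w v : V} (hx : x ∈ S) (hy : y ∈ S) (hz : z ∈ S)
    (nxy : x ≠ y) (nyz : y ≠ z) (nxz : x ≠ z)
    (hu : u ∈ CompOf G S s) (huy : G.Adj u y) (huz : G.Adj u z) (hux : ¬ G.Adj u x)
    (hw : w ∈ CompOf G S s) (hwx : G.Adj w x) (hwy : G.Adj w y) (hwz : ¬ G.Adj w z)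
    (hv : v ∈ CompOf G S t) (hvx : G.Adj v x) (hvz : G.Adj v z) :
    G.Adj v y := by
  by_contra hvy
  refine no_induced_C6 hch huy hwy.symm hwx hvx.symm hvz huz.symm
    (same_side_not_adj col huy hwy) hux (compOf_no_cross hsep hu hv)
    (fun hA => hind y hy x hx hA) (fun hA => hvy hA.symm) (fun hA => hind y hy z hz hA)
    (compOf_no_cross hsep hw hv) hwz (fun hA => hind x hx z hz hA)
    ?_ ?_ ?_ ?_ ?_ ?_ ?_ ?_ ?_
  · intro he; rw [he] at hux; exact hux hwx
  · exact comp_ne_sep hu hx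
  · intro he; rw [he] at hu; exact compOf_disjoint hsep hu hv
  · exact nxy.symm
  · exact (comp_ne_sep hv hy).symm
  · exact nyz
  · intro he; rw [he] at hw; exact compOf_disjoint hsep hw hv
  · exact comp_ne_sep hw hz
  · exact nxz

lemma upgrade2 (hch : ChordalityAtMost G 5) (col : G.Coloring (Fin 2))
    (hsep : IsSep G s t S) (hind : ∀ u ∈ S, ∀ v ∈ S, ¬ G.Adj u v)
    {x y z u w v : V} (hx : x ∈ S) (hy : y ∈ S) (hz : z ∈ S)
    (nxy : x ≠ y) (nyz : y ≠ z) (nxz : x ≠ z)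
    (hu : u ∈ CompOf G S s) (huy : G.Adj u y) (huz : G.Adj u z) (hux : ¬ G.Adj u x)
    (hw : w ∈ CompOf G S s) (hwx : G.Adj w x) (hwy : G.Adj w y) (hwz : ¬ G.Adj w z)
    (hv : v ∈ CompOf G S s) (hvx : G.Adj v x) (hvz : G.Adj v z) :
    G.Adj v y := by
  by_contra hvy
  refine no_induced_C6 hch huy hwy.symm hwx hvx.symm hvz huz.symm
    (same_side_not_adj col huy hwy) hux (same_side_not_adj col huz hvz)
    (fun hA => hind y hy x hx hA) (fun hA => hvy hA.symm) (fun hA => hind y hy z hz hA)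
    (same_side_not_adj col hwx hvx) hwz (fun hA => hind x hx z hz hA)
    ?_ ?_ ?_ ?_ ?_ ?_ ?_ ?_ ?_
  · intro he; rw [he] at hux; exact hux hwx
  · exact comp_ne_sep hu hx
  · intro he; rw [he] at hux; exact hux hvx
  · exact nxy.symm
  · exact (comp_ne_sep hv hy).symm
  · exact nyz
  · intro he; rw [he] at hwz; exact hwz hvz
  · exact comp_ne_sep hw hz
  · exact nxz

lemma all_common (hch : ChordalityAtMost G 5) (col : G.Coloring (Fin 2))
    (hS : IsMinimalSep G s t S) (hind : ∀ u ∈ S, ∀ v ∈ S, ¬ G.Adj u v) :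
    ∀ (n : ℕ) (T : Finset V), T.card = n → ↑T ⊆ S →
      (∃ u ∈ CompOf G S s, ∀ a ∈ T, G.Adj u a) ∧
      (∃ v ∈ CompOf G S t, ∀ a ∈ T, G.Adj v a) := by
  classical
  have hsep := hS.1
  have hsep' := isSep_symm hsep
  intro n
  induction n using Nat.strong_induction_on with
  | _ n ih =>
    intro T hcard hTS
    have hmemS : ∀ a ∈ T, a ∈ S := fun a ha => hTS (Finset.mem_coe.mpr ha)
    match hn : n with
    | 0 =>
      have hT : T = ∅ := Finset.card_eq_zero.mp hcard
      subst hT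
      exact ⟨⟨s, compOf_self hsep.1, by simp⟩, ⟨t, compOf_self hsep.2.1, by simp⟩⟩
    | 1 =>
      obtain ⟨a, rfl⟩ := Finset.card_eq_one.mp hcard
      have haS : a ∈ S := hmemS a (Finset.mem_singleton_self a)
      obtain ⟨b, hb, hab⟩ := minimalSep_neighbor hS haS
      obtain ⟨c, hc, hac⟩ := minimalSep_neighbor (isMinimalSep_symm hS) haS
      exact ⟨⟨b, hb, fun a' ha' => by rw [Finset.mem_singleton.mp ha']; exact hab.symm⟩,
             ⟨c, hc, fun a' ha' => by rw [Finset.mem_singleton.mp ha']; exact hac.symm⟩⟩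
    | 2 =>
      obtain ⟨a, b, hab, rfl⟩ := Finset.card_eq_two.mp hcard
      have haS : a ∈ S := hmemS a (by simp)
      have hbS : b ∈ S := hmemS b (by simp)
      obtain ⟨⟨w, hw, hwa, hwb⟩, ⟨v, hv, hva, hvb⟩⟩ := pair_common hch col hS hind haS hbS hab
      refine ⟨⟨w, hw, ?_⟩, ⟨v, hv, ?_⟩⟩ <;>
        · intro a' ha'
          rcases Finset.mem_insert.mp ha' with h | h
          · subst h; first | exact hwa | exact hva
          · rw [Finset.mem_singleton.mp h]; first | exact hwb | exact hvb
    | (m+3) =>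
      -- pick three distinct elements
      obtain ⟨x, hxT⟩ := Finset.card_pos.mp (show 0 < T.card by omega)
      obtain ⟨y, hyE⟩ := Finset.card_pos.mp
        (by rw [Finset.card_erase_of_mem hxT]; omega : 0 < (T.erase x).card)
      obtain ⟨z, hzE⟩ := Finset.card_pos.mp
        (by rw [Finset.card_erase_of_mem hyE, Finset.card_erase_of_mem hxT]; omega : 0 < ((T.erase x).erase y).card)
      obtain ⟨hyx, hyT⟩ := Finset.mem_erase.mp hyE
      obtain ⟨hzy, hzE'⟩ := Finset.mem_erase.mp hzE
      obtain ⟨hzx, hzT⟩ := Finset.mem_erase.mp hzE'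
      have hxS := hmemS x hxT
      have hyS := hmemS y hyT
      have hzS := hmemS z hzT
      -- induction hypotheses
      have hsub : ∀ c : V, (↑(T.erase c) : Set V) ⊆ S :=
        fun c a ha => hTS (Finset.mem_coe.mpr (Finset.mem_of_mem_erase (Finset.mem_coe.mp ha)))
      have hcerase : ∀ c ∈ T, (T.erase c).card = m + 2 := by
        intro c hc; rw [Finset.card_erase_of_mem hc, hcard]; omega
      obtain ⟨⟨u, hu, huA⟩, ⟨ut, hut, hutA⟩⟩ :=
        ih (m+2) (by omega) (T.erase x) (hcerase x hxT) (hsub x)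
      obtain ⟨⟨w, hw, hwA⟩, ⟨wt, hwt, hwtA⟩⟩ :=
        ih (m+2) (by omega) (T.erase z) (hcerase z hzT) (hsub z)
      obtain ⟨⟨w', hw', hw'A⟩, ⟨vt, hvt, hvtA⟩⟩ :=
        ih (m+2) (by omega) (T.erase y) (hcerase y hyT) (hsub y)
      -- adjacency facts
      have huy : G.Adj u y := huA y (Finset.mem_erase.mpr ⟨hyx, hyT⟩)
      have huz : G.Adj u z := huA z (Finset.mem_erase.mpr ⟨hzx, hzT⟩)
      have huty : G.Adj ut y := hutA y (Finset.mem_erase.mpr ⟨hyx, hyT⟩)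
      have hutz : G.Adj ut z := hutA z (Finset.mem_erase.mpr ⟨hzx, hzT⟩)
      have hwx : G.Adj w x := hwA x (Finset.mem_erase.mpr ⟨fun h => hzx h.symm, hxT⟩)
      have hwy : G.Adj w y := hwA y (Finset.mem_erase.mpr ⟨fun h => hzy h.symm, hyT⟩)
      have hwtx : G.Adj wt x := hwtA x (Finset.mem_erase.mpr ⟨fun h => hzx h.symm, hxT⟩)
      have hwty : G.Adj wt y := hwtA y (Finset.mem_erase.mpr ⟨fun h => hzy h.symm, hyT⟩)
      have hw'x : G.Adj w' x := hw'A x (Finset.mem_erase.mpr ⟨fun h => hyx h.symm, hxT⟩)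
      have hw'z : G.Adj w' z := hw'A z (Finset.mem_erase.mpr ⟨hzy, hzT⟩)
      have hvtx : G.Adj vt x := hvtA x (Finset.mem_erase.mpr ⟨fun h => hyx h.symm, hxT⟩)
      have hvtz : G.Adj vt z := hvtA z (Finset.mem_erase.mpr ⟨hzy, hzT⟩)
      have nxy : x ≠ y := fun h => hyx h.symm
      have nyz : y ≠ z := fun h => hzy h.symm
      have nxz : x ≠ z := fun h => hzx h.symm
      -- extenders
      have hextend : ∀ (c : V) (u0 : V), c ∈ T → G.Adj u0 c → (∀ a ∈ T.erase c, G.Adj u0 a) →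
          ∀ a ∈ T, G.Adj u0 a := by
        intro c u0 hc hu0c hu0A a ha
        by_cases hac : a = c
        · subst hac; exact hu0c
        · exact hu0A a (Finset.mem_erase.mpr ⟨hac, ha⟩)
      have hs_or : (∃ u0 ∈ CompOf G S s, ∀ a ∈ T, G.Adj u0 a) ∨ (¬G.Adj u x ∧ ¬G.Adj w z) := by
        by_cases h1 : G.Adj u x
        · exact Or.inl ⟨u, hu, hextend x u hxT h1 huA⟩
        · by_cases h2 : G.Adj w z
          · exact Or.inl ⟨w, hw, hextend z w hzT h2 hwA⟩
          · exact Or.inr ⟨h1, h2⟩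
      have ht_or : (∃ v0 ∈ CompOf G S t, ∀ a ∈ T, G.Adj v0 a) ∨ (¬G.Adj ut x ∧ ¬G.Adj wt z) := by
        by_cases h1 : G.Adj ut x
        · exact Or.inl ⟨ut, hut, hextend x ut hxT h1 hutA⟩
        · by_cases h2 : G.Adj wt z
          · exact Or.inl ⟨wt, hwt, hextend z wt hzT h2 hwtA⟩
          · exact Or.inr ⟨h1, h2⟩
      rcases hs_or with hsdone | ⟨h1, h2⟩
      · rcases ht_or with htdone | ⟨h1', h2'⟩
        · exact ⟨hsdone, htdone⟩
        · -- t-side deficient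
          have hvy : G.Adj w' y :=
            upgrade hch col hsep' hind hxS hyS hzS nxy nyz nxz
              hut huty hutz h1' hwt hwtx hwty h2' hw' hw'x hw'z
          have hvty : G.Adj vt y :=
            upgrade2 hch col hsep' hind hxS hyS hzS nxy nyz nxz
              hut huty hutz h1' hwt hwtx hwty h2' hvt hvtx hvtz
          exact ⟨⟨w', hw', hextend y w' hyT hvy hw'A⟩, ⟨vt, hvt, hextend y vt hyT hvty hvtA⟩⟩
      · -- s-side deficient
        have hvty : G.Adj vt y :=
          upgrade hch col hsep hind hxS hyS hzS nxy nyz nxz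
            hu huy huz h1 hw hwx hwy h2 hvt hvtx hvtz
        have hw'y : G.Adj w' y :=
          upgrade2 hch col hsep hind hxS hyS hzS nxy nyz nxz
            hu huy huz h1 hw hwx hwy h2 hw' hw'x hw'z
        exact ⟨⟨w', hw', hextend y w' hyT hw'y hw'A⟩, ⟨vt, hvt, hextend y vt hyT hvty hvtA⟩⟩

end Upgrade

theorem stmt12 {V : Type*} [Fintype V] (G : SimpleGraph V)
    (hbip : G.Colorable 2) (hch : ChordalityAtMost G 5)
    (s t : V) (hst : s ≠ t) (hadj : ¬ G.Adj s t)
    (S : Set V) (hS : IsMinimalSep G s t S)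
    (hind : ∀ u ∈ S, ∀ v ∈ S, ¬ G.Adj u v) :
    (∃ u ∈ CompOf G S s, S ⊆ G.neighborSet u) ∧
    (∃ v ∈ CompOf G S t, S ⊆ G.neighborSet v) := by
  classical
  obtain ⟨col⟩ := hbip
  obtain ⟨⟨u, hu, huA⟩, ⟨v, hv, hvA⟩⟩ :=
    all_common hch col hS hind S.toFinset.card S.toFinset rfl (by simp)
  exact ⟨⟨u, hu, fun a ha => huA a (Set.mem_toFinset.mpr ha)⟩,
         ⟨v, hv, fun a ha => hvA a (Set.mem_toFinset.mpr ha)⟩⟩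
end
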